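/- Let 0 < a < s < n and let φ: (0,∞) → [0,∞) be nonincreasing and left-continuous with lim_{r→∞} φ(r) r^{(s-a)/n} = 0. Then ∫_0^∞ sup_{y ≤ r < ∞} (φ(r) r^{(s-a)/n}) · y^{a/n - 1} dy ≤ (C(n)/a) ∫_0^∞ φ(y) y^{s/n - 1} dy. -/

import Mathlib

open MeasureTheory Set Filter
open scoped ENNReal Topology

private lemma aux_rpow_Ioc (a b p : ℝ) (ha : 0 ≤ a) (hab : a ≤ b) (hp : -1 < p) :
    ∫⁻ y in Set.Ioc a b, ENNReal.ofReal (y ^ p)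
      = ENNReal.ofReal ((b ^ (p + 1) - a ^ (p + 1)) / (p + 1)) := by
  rw [← ofReal_integral_eq_lintegral_ofReal]
  · rw [← intervalIntegral.integral_of_le hab, integral_rpow (Or.inl hp)]
  · exact (intervalIntegrable_iff_integrableOn_Ioc_of_le hab).mp
      (intervalIntegral.intervalIntegrable_rpow' hp)
  · filter_upwards [ae_restrict_mem measurableSet_Ioc] with y hy
    exact Real.rpow_nonneg (le_trans ha hy.1.le) p

private lemma aux_rpow_Ioo (b p : ℝ) (hb : 0 ≤ b) (hp : -1 < p) :
    ∫⁻ y in Set.Ioo 0 b, ENNReal.ofReal (y ^ p)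
      = ENNReal.ofReal (b ^ (p + 1) / (p + 1)) := by
  rw [setLIntegral_congr Ioo_ae_eq_Ioc, aux_rpow_Ioc 0 b p le_rfl hb hp,
    Real.zero_rpow (by linarith), sub_zero]

private lemma aux_half_rpow (β : ℝ) (h0 : 0 ≤ β) (h1 : β ≤ 1) :
    ((1 : ℝ) / 2) ^ β ≤ 1 - β / 2 := by
  have h := convexOn_exp.2 (Set.mem_univ (0 : ℝ)) (Set.mem_univ (Real.log (1 / 2)))
    (by linarith : (0 : ℝ) ≤ 1 - β) h0 (by ring)
  rw [Real.rpow_def_of_pos (by norm_num : (0 : ℝ) < 1 / 2)]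
  rw [smul_eq_mul, smul_eq_mul, smul_eq_mul, smul_eq_mul, Real.exp_zero,
    Real.exp_log (by norm_num : (0 : ℝ) < 1 / 2)] at h
  calc Real.exp (Real.log (1 / 2) * β) = Real.exp ((1 - β) * 0 + β * Real.log (1 / 2)) := by
        ring_nf
    _ ≤ (1 - β) * 1 + β * (1 / 2) := h
    _ = 1 - β / 2 := by ring

theorem statement10 (n : ℕ) (hn : 0 < n) :
    ∃ C : ℝ, 0 < C ∧ ∀ a s : ℝ, 0 < a → a < s → s < n →
      ∀ φ : ℝ → ℝ,
        (∀ y ∈ Ioi (0 : ℝ), 0 ≤ φ y) →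
        AntitoneOn φ (Ioi (0 : ℝ)) →
        (∀ x ∈ Ioi (0 : ℝ), ContinuousWithinAt φ (Iio x) x) →
        Tendsto (fun r : ℝ => φ r * r ^ ((s - a) / n)) atTop (𝓝 0) →
        ∫⁻ y in Ioi (0 : ℝ),
            ENNReal.ofReal
              (sSup ((fun r : ℝ => φ r * r ^ ((s - a) / n)) '' Ici y) * y ^ (a / n - 1))
          ≤ ENNReal.ofReal (C / a) *
              ∫⁻ y in Ioi (0 : ℝ), ENNReal.ofReal (φ y * y ^ (s / n - 1)) := by
  have hn' : (0 : ℝ) < n := by exact_mod_cast hn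
  refine ⟨4 * n, by positivity, ?_⟩
  intro a s ha has hsn φ hφ0 hmono hcont hlim
  set β : ℝ := (s - a) / n with hβdef
  have hβ0 : 0 < β := div_pos (by linarith) hn'
  have hβ1 : β ≤ 1 := by rw [hβdef, div_le_one hn']; linarith
  have han : 0 < a / n := div_pos ha hn'
  have han1 : a / n ≤ 1 := by rw [div_le_one hn']; linarith
  set γ : ℝ := a / n - 1 with hγdef
  have hγ : -1 < γ := by rw [hγdef]; linarith
  -- measurability
  have hφm : AEMeasurable φ (volume.restrict (Ioi (0 : ℝ))) :=
    aemeasurable_restrict_of_antitoneOn measurableSet_Ioi hmono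
  set g : ℝ → ℝ≥0∞ := (Ioi (0 : ℝ)).indicator (fun t => ENNReal.ofReal (φ t * t ^ (β - 1)))
    with hgdef
  have hgm : AEMeasurable g volume := by
    rw [hgdef, aemeasurable_indicator_iff measurableSet_Ioi]
    have hm : AEMeasurable (fun t : ℝ => φ t * t ^ (β - 1)) (volume.restrict (Ioi (0 : ℝ))) :=
      hφm.mul ((by fun_prop : Measurable fun t : ℝ => t ^ (β - 1)).aemeasurable)
    exact ENNReal.measurable_ofReal.comp_aemeasurable hm
  set f₀ : ℝ → ℝ≥0∞ := hgm.mk g with hf₀def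
  have hf₀m : Measurable f₀ := hgm.measurable_mk
  have hgf : g =ᵐ[volume] f₀ := hgm.ae_eq_mk
  set J : ℝ → ℝ≥0∞ := fun y => ∫⁻ t in Ioi (y / 2), g t with hJdef
  -- Key pointwise bound A1
  have hA1 : ∀ y : ℝ, 0 < y → ∀ r ∈ Ici y, ENNReal.ofReal (φ r * r ^ β) ≤ 2 * J y := by
    intro y hy r hr
    have hyr : y ≤ r := hr
    have hr0 : 0 < r := lt_of_lt_of_le hy hr
    have hφr : 0 ≤ φ r := hφ0 r hr0
    have hrb : 0 ≤ r ^ β := Real.rpow_nonneg hr0.le β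
    have step1 : ∫⁻ t in Ioc (r / 2) r, ENNReal.ofReal (φ r) * ENNReal.ofReal (t ^ (β - 1))
        ≤ J y := by
      calc ∫⁻ t in Ioc (r / 2) r, ENNReal.ofReal (φ r) * ENNReal.ofReal (t ^ (β - 1))
          ≤ ∫⁻ t in Ioc (r / 2) r, g t := by
            apply lintegral_mono_ae
            filter_upwards [ae_restrict_mem measurableSet_Ioc] with t ht
            have ht0 : 0 < t := lt_trans (by linarith) ht.1
            rw [hgdef, Set.indicator_of_mem (mem_Ioi.mpr ht0), ← ENNReal.ofReal_mul hφr]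
            exact ENNReal.ofReal_le_ofReal
              (mul_le_mul_of_nonneg_right (hmono (mem_Ioi.mpr ht0) (mem_Ioi.mpr hr0) ht.2)
                (Real.rpow_nonneg ht0.le _))
        _ ≤ J y := by
            refine lintegral_mono' (Measure.restrict_mono ?_ le_rfl) le_rfl
            intro t ht
            exact lt_of_le_of_lt (by linarith : y / 2 ≤ r / 2) ht.1
    have step2 : ∫⁻ t in Ioc (r / 2) r, ENNReal.ofReal (φ r) * ENNReal.ofReal (t ^ (β - 1))
        = ENNReal.ofReal (φ r) * ENNReal.ofReal ((r ^ β - (r / 2) ^ β) / β) := by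
      rw [lintegral_const_mul' _ _ ENNReal.ofReal_ne_top,
        aux_rpow_Ioc (r / 2) r (β - 1) (by linarith) (by linarith) (by linarith),
        sub_add_cancel]
    have hhalf : (r / 2 : ℝ) ^ β = r ^ β * ((1 : ℝ) / 2) ^ β := by
      rw [show (r / 2 : ℝ) = r * (1 / 2) by ring, Real.mul_rpow hr0.le (by norm_num)]
    have key_real : φ r * r ^ β ≤ 2 * (φ r * ((r ^ β - (r / 2) ^ β) / β)) := by
      have h1 : ((1 : ℝ) / 2) ^ β ≤ 1 - β / 2 := aux_half_rpow β hβ0.le hβ1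
      have h2 : r ^ β / 2 ≤ (r ^ β - (r / 2) ^ β) / β := by
        rw [le_div_iff₀ hβ0, hhalf]
        nlinarith
      calc φ r * r ^ β = 2 * (φ r * (r ^ β / 2)) := by ring
        _ ≤ 2 * (φ r * ((r ^ β - (r / 2) ^ β) / β)) := by
            have := mul_le_mul_of_nonneg_left h2 hφr
            linarith
    calc ENNReal.ofReal (φ r * r ^ β)
        ≤ ENNReal.ofReal (2 * (φ r * ((r ^ β - (r / 2) ^ β) / β))) :=
          ENNReal.ofReal_le_ofReal key_real
      _ = 2 * (ENNReal.ofReal (φ r) * ENNReal.ofReal ((r ^ β - (r / 2) ^ β) / β)) := by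
          rw [ENNReal.ofReal_mul (by norm_num : (0 : ℝ) ≤ 2),
            ENNReal.ofReal_mul hφr, ENNReal.ofReal_ofNat]
      _ = 2 * ∫⁻ t in Ioc (r / 2) r, ENNReal.ofReal (φ r) * ENNReal.ofReal (t ^ (β - 1)) := by
          rw [step2]
      _ ≤ 2 * J y := by exact mul_le_mul_right step1 2
  -- Key bound on the sSup
  have keyA : ∀ y ∈ Ioi (0 : ℝ),
      ENNReal.ofReal (sSup ((fun r : ℝ => φ r * r ^ β) '' Ici y) * y ^ γ)
        ≤ 2 * ENNReal.ofReal (y ^ γ) * J y := by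
    intro y hy
    have hy0 : 0 < y := hy
    set S := (fun r : ℝ => φ r * r ^ β) '' Ici y with hSdef
    have hSne : S.Nonempty := ⟨_, ⟨y, self_mem_Ici, rfl⟩⟩
    have hSnonneg : ∀ x ∈ S, 0 ≤ x := by
      rintro x ⟨r, hrmem, rfl⟩
      have hr0 : 0 < r := lt_of_lt_of_le hy0 hrmem
      exact mul_nonneg (hφ0 r hr0) (Real.rpow_nonneg hr0.le β)
    by_cases hJ : J y = ⊤
    · have h2 : (2 : ℝ≥0∞) * ENNReal.ofReal (y ^ γ) ≠ 0 := by
        simp only [ne_eq, mul_eq_zero, not_or, ENNReal.ofReal_eq_zero, not_le]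
        exact ⟨two_ne_zero, Real.rpow_pos_of_pos hy0 γ⟩
      rw [hJ, ENNReal.mul_top h2]
      exact le_top
    · have hfin : 2 * J y ≠ ⊤ := ENNReal.mul_ne_top (by norm_num) hJ
      have hbound : sSup S ≤ (2 * J y).toReal := by
        refine csSup_le hSne ?_
        rintro x ⟨r, hrmem, rfl⟩
        have hx0 : 0 ≤ φ r * r ^ β := hSnonneg _ ⟨r, hrmem, rfl⟩
        calc φ r * r ^ β = (ENNReal.ofReal (φ r * r ^ β)).toReal :=
              (ENNReal.toReal_ofReal hx0).symm
          _ ≤ (2 * J y).toReal := ENNReal.toReal_mono hfin (hA1 y hy0 r hrmem)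
      calc ENNReal.ofReal (sSup S * y ^ γ)
          = ENNReal.ofReal (sSup S) * ENNReal.ofReal (y ^ γ) :=
            ENNReal.ofReal_mul (Real.sSup_nonneg hSnonneg)
        _ ≤ (2 * J y) * ENNReal.ofReal (y ^ γ) := by
            refine mul_le_mul_left ?_ _
            calc ENNReal.ofReal (sSup S) ≤ ENNReal.ofReal ((2 * J y).toReal) :=
                  ENNReal.ofReal_le_ofReal hbound
              _ = 2 * J y := ENNReal.ofReal_toReal hfin
        _ = 2 * ENNReal.ofReal (y ^ γ) * J y := by ring
  -- the product function for Tonelli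
  set F : ℝ → ℝ → ℝ≥0∞ := fun y t => if y / 2 < t then ENNReal.ofReal (y ^ γ) * f₀ t else 0
    with hFdef
  have hFm : Measurable (Function.uncurry F) := by
    apply Measurable.ite
    · exact measurableSet_lt (measurable_fst.div_const 2) measurable_snd
    · exact (((by fun_prop : Measurable fun x : ℝ => x ^ γ).comp
        measurable_fst).ennreal_ofReal).mul (hf₀m.comp measurable_snd)
    · exact measurable_const
  have swap : ∫⁻ y in Ioi (0 : ℝ), ∫⁻ t, F y t = ∫⁻ t, ∫⁻ y in Ioi (0 : ℝ), F y t :=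
    lintegral_lintegral_swap hFm.aemeasurable
  have hinner : ∀ y ∈ Ioi (0 : ℝ), ENNReal.ofReal (y ^ γ) * J y = ∫⁻ t, F y t := by
    intro y hy
    have hJy : J y = ∫⁻ t in Ioi (y / 2), f₀ t :=
      lintegral_congr_ae (ae_restrict_of_ae hgf)
    rw [hJy, ← lintegral_const_mul' _ _ ENNReal.ofReal_ne_top,
      ← lintegral_indicator measurableSet_Ioi]
    apply lintegral_congr
    intro t
    rw [hFdef]
    simp only [Set.indicator_apply, mem_Ioi]
  have houter : ∀ t : ℝ, ∫⁻ y in Ioi (0 : ℝ), F y t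
      = (Ioi (0 : ℝ)).indicator
          (fun t => ENNReal.ofReal ((2 * t) ^ (a / (n : ℝ)) / (a / n)) * f₀ t) t := by
    intro t
    by_cases ht : 0 < t
    · rw [Set.indicator_of_mem (mem_Ioi.mpr ht)]
      have hFt : ∀ y : ℝ, F y t
          = (Iio (2 * t)).indicator (fun y => ENNReal.ofReal (y ^ γ) * f₀ t) y := by
        intro y
        rw [hFdef]
        simp only [Set.indicator_apply, mem_Iio]
        exact if_congr (by constructor <;> intro h <;> linarith) rfl rfl
      simp_rw [hFt]
      rw [lintegral_indicator measurableSet_Iio, Measure.restrict_restrict measurableSet_Iio,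
        Set.Iio_inter_Ioi,
        lintegral_mul_const _ ((by fun_prop : Measurable fun y : ℝ => y ^ γ).ennreal_ofReal),
        aux_rpow_Ioo (2 * t) γ (by linarith) hγ]
      congr 2
      rw [hγdef, sub_add_cancel]
    · rw [Set.indicator_of_notMem (by simpa using ht)]
      have hz : ∀ᵐ y ∂(volume.restrict (Ioi (0 : ℝ))), F y t = 0 := by
        filter_upwards [ae_restrict_mem measurableSet_Ioi] with y hy
        rw [hFdef]
        refine if_neg (not_lt.mpr ?_)
        push_neg at ht
        have : 0 < y / 2 := by simpa using half_pos (mem_Ioi.mp hy)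
        linarith
      rw [lintegral_congr_ae hz, lintegral_zero]
  -- final integral comparison
  set I := ∫⁻ y in Ioi (0 : ℝ), ENNReal.ofReal (φ y * y ^ (s / (n : ℝ) - 1)) with hIdef
  have hfinal : ∫⁻ t, (Ioi (0 : ℝ)).indicator
      (fun t => ENNReal.ofReal ((2 * t) ^ (a / (n : ℝ)) / (a / n)) * f₀ t) t
      ≤ ENNReal.ofReal (2 * n / a) * I := by
    have h1 : ∫⁻ t, (Ioi (0 : ℝ)).indicator
        (fun t => ENNReal.ofReal ((2 * t) ^ (a / (n : ℝ)) / (a / n)) * f₀ t) t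
        = ∫⁻ t, (Ioi (0 : ℝ)).indicator
        (fun t => ENNReal.ofReal ((2 * t) ^ (a / (n : ℝ)) / (a / n)) * g t) t := by
      apply lintegral_congr_ae
      filter_upwards [hgf] with t htg
      simp only [Set.indicator_apply]
      rw [htg]
    rw [h1, lintegral_indicator measurableSet_Ioi]
    have h3 : ∫⁻ t in Ioi (0 : ℝ), ENNReal.ofReal ((2 * t) ^ (a / (n : ℝ)) / (a / n)) * g t
        ≤ ∫⁻ t in Ioi (0 : ℝ),
            ENNReal.ofReal (2 * n / a) * ENNReal.ofReal (φ t * t ^ (s / (n : ℝ) - 1)) := by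
      apply lintegral_mono_ae
      filter_upwards [ae_restrict_mem measurableSet_Ioi] with t ht
      have ht0 : 0 < t := mem_Ioi.mp ht
      rw [hgdef, Set.indicator_of_mem (mem_Ioi.mpr ht0)]
      rw [← ENNReal.ofReal_mul (by positivity), ← ENNReal.ofReal_mul (by positivity)]
      apply ENNReal.ofReal_le_ofReal
      have hts : t ^ (a / (n : ℝ)) * t ^ (β - 1) = t ^ (s / (n : ℝ) - 1) := by
        rw [← Real.rpow_add ht0, hβdef]
        congr 1
        field_simp
        ring
      have h2a : (2 : ℝ) ^ (a / (n : ℝ)) ≤ 2 := by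
        calc (2 : ℝ) ^ (a / (n : ℝ)) ≤ (2 : ℝ) ^ (1 : ℝ) :=
              Real.rpow_le_rpow_of_exponent_le (by norm_num) han1
          _ = 2 := Real.rpow_one 2
      have hexp : (2 * t) ^ (a / (n : ℝ)) / (a / n) * (φ t * t ^ (β - 1))
          = (2 : ℝ) ^ (a / (n : ℝ)) * (n / a) * (φ t * t ^ (s / (n : ℝ) - 1)) := by
        rw [Real.mul_rpow (by norm_num) ht0.le, div_eq_mul_inv _ (a / (n : ℝ)), inv_div,
          ← hts]
        ring
      rw [hexp]
      have hX : 0 ≤ φ t * t ^ (s / (n : ℝ) - 1) :=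
        mul_nonneg (hφ0 t ht0) (Real.rpow_nonneg ht0.le _)
      have hna : 0 ≤ (n : ℝ) / a := by positivity
      calc (2 : ℝ) ^ (a / (n : ℝ)) * (n / a) * (φ t * t ^ (s / (n : ℝ) - 1))
          ≤ 2 * ((n : ℝ) / a) * (φ t * t ^ (s / (n : ℝ) - 1)) := by
            apply mul_le_mul_of_nonneg_right _ hX
            exact mul_le_mul_of_nonneg_right h2a hna
        _ = 2 * n / a * (φ t * t ^ (s / (n : ℝ) - 1)) := by ring
    calc ∫⁻ t in Ioi (0 : ℝ), ENNReal.ofReal ((2 * t) ^ (a / (n : ℝ)) / (a / n)) * g t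
        ≤ ∫⁻ t in Ioi (0 : ℝ),
            ENNReal.ofReal (2 * n / a) * ENNReal.ofReal (φ t * t ^ (s / (n : ℝ) - 1)) := h3
      _ = ENNReal.ofReal (2 * n / a) * I := by
          rw [hIdef, lintegral_const_mul' _ _ ENNReal.ofReal_ne_top]
  -- assemble everything
  calc ∫⁻ y in Ioi (0 : ℝ),
        ENNReal.ofReal (sSup ((fun r : ℝ => φ r * r ^ β) '' Ici y) * y ^ γ)
      ≤ ∫⁻ y in Ioi (0 : ℝ), 2 * ENNReal.ofReal (y ^ γ) * J y := by
        apply lintegral_mono_ae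
        filter_upwards [ae_restrict_mem measurableSet_Ioi] with y hy
        exact keyA y hy
    _ = 2 * ∫⁻ y in Ioi (0 : ℝ), ENNReal.ofReal (y ^ γ) * J y := by
        rw [← lintegral_const_mul' 2 _ (by norm_num : (2 : ℝ≥0∞) ≠ ⊤)]
        apply lintegral_congr
        intro y
        ring
    _ = 2 * ∫⁻ y in Ioi (0 : ℝ), ∫⁻ t, F y t := by
        congr 1
        exact setLIntegral_congr_fun measurableSet_Ioi hinner
    _ = 2 * ∫⁻ t, ∫⁻ y in Ioi (0 : ℝ), F y t := by rw [swap]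
    _ = 2 * ∫⁻ t, (Ioi (0 : ℝ)).indicator
          (fun t => ENNReal.ofReal ((2 * t) ^ (a / (n : ℝ)) / (a / n)) * f₀ t) t := by
        congr 1
        exact lintegral_congr houter
    _ ≤ 2 * (ENNReal.ofReal (2 * n / a) * I) := mul_le_mul_right hfinal 2
    _ = ENNReal.ofReal (4 * n / a) * I := by
        rw [← mul_assoc, show (2 : ℝ≥0∞) = ENNReal.ofReal 2 by simp,
          ← ENNReal.ofReal_mul (by norm_num)]
        congr 2
        ring
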